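/- Let a, b, c, d, p, q, r, s, w be integers satisfying a·p + b·q = 1 + a·b and c·r + d·s = 1 + c·d, and set u = a·c + b·d and v = a·d − b·c. If u·w ≡ 1 (mod v), then (a² + b²)·(c·p − d·(a − q))·w ≡ 1 (mod v); that is, (c·p − d·(a − q))·w represents the modular inverse of a² + b² modulo v. -/
import Mathlib

theorem inverse_of_sum_of_squares_ab_mod_v
    (a b c d p q r s w : ℤ)
    (hab : a * p + b * q = 1 + a * b)
    (hcd : c * r + d * s = 1 + c * d)
    (hw : (a * c + b * d) * w ≡ 1 [ZMOD a * d - b * c]) :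
    (a ^ 2 + b ^ 2) * ((c * p - d * (a - q)) * w) ≡ 1 [ZMOD a * d - b * c] := by
  have key : (a ^ 2 + b ^ 2) * ((c * p - d * (a - q)) * w) ≡ (a * c + b * d) * w [ZMOD a * d - b * c] := by
    refine Int.ModEq.symm (Int.modEq_iff_dvd.mpr ⟨(a * q - b * p - a ^ 2) * w, ?_⟩)
    linear_combination ((a * c + b * d) * w) * hab
  exact key.trans hw
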